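/- If ρ₁ = |Ψ₁⟩⟨Ψ₁| with |Ψ₁⟩ = √(1−(d−1)δ)|00⟩ + √δ Σ_{j=1}^{d−1}|jj⟩ for small δ > 0, then ρ₁ is a pure entangled state of full Schmidt rank d and its entanglement entropy E(ρ₁) = −(1−(d−1)δ)log(1−(d−1)δ) − (d−1)δ log δ tends to 0 as δ → 0⁺, while its maximal steered coherence equals the maximal value d − 1 for every δ ∈ (0, 1/(d−1)). Hence maximal steered coherence and entanglement entropy give different orderings of states. -/

import Mathlib

open Matrix BigOperators Kronecker ComplexOrder

noncomputable section

def ptraceA {dA dB : ℕ} (ρ : Matrix (Fin dA × Fin dB) (Fin dA × Fin dB) ℂ) :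
    Matrix (Fin dB) (Fin dB) ℂ :=
  fun j j' => ∑ a, ρ (a, j) (a, j')

def proj {n : Type*} [Fintype n] (x : n → ℂ) : Matrix n n ℂ :=
  vecMulVec x (star x)

/-- The vector |Ψ₁⟩ = √(1−(d−1)δ)|00⟩ + √δ Σ_{j≥1} |jj⟩. -/
def Ψ1 (d : ℕ) (δ : ℝ) : Fin d × Fin d → ℂ := fun x =>
  if x.1 = x.2 then
    (if (x.1 : ℕ) = 0 then (Real.sqrt (1 - (d - 1) * δ) : ℂ) else (Real.sqrt δ : ℂ))
  else 0

def cc (d : ℕ) (δ : ℝ) : Fin d → ℝ := fun i =>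
  if (i : ℕ) = 0 then Real.sqrt (1 - (d - 1) * δ) else Real.sqrt δ

lemma Ψ1_apply (d : ℕ) (δ : ℝ) (x : Fin d × Fin d) :
    Ψ1 d δ x = if x.1 = x.2 then (cc d δ x.2 : ℂ) else 0 := by
  by_cases h : x.1 = x.2 <;> simp [Ψ1, cc, h, apply_ite Complex.ofReal]

lemma entry_eq (d : ℕ) (δ : ℝ) (M : Matrix (Fin d) (Fin d) ℂ) (p q : Fin d × Fin d) :
    ((M ⊗ₖ (1 : Matrix (Fin d) (Fin d) ℂ)) * proj (Ψ1 d δ)) p q =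
      if q.1 = q.2 then M p.1 p.2 * (cc d δ p.2 : ℂ) * (cc d δ q.2 : ℂ) else 0 := by
  rw [mul_apply]
  by_cases hq : q.1 = q.2
  · rw [if_pos hq]
    rw [Finset.sum_eq_single (p.2, p.2)]
    · simp [proj, vecMulVec_apply, Ψ1_apply, kroneckerMap_apply, one_apply,
        Complex.conj_ofReal, mul_assoc, hq]
    · rintro ⟨x, y⟩ - hxy
      simp only [proj, vecMulVec_apply, Ψ1_apply, kroneckerMap_apply, one_apply]
      rcases eq_or_ne x y with rfl | hne
      · rcases eq_or_ne p.2 x with rfl | hne2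
        · exact absurd rfl hxy
        · simp [hne2]
      · simp [hne]
    · simp
  · rw [if_neg hq]
    apply Finset.sum_eq_zero
    intro x _
    simp [proj, vecMulVec_apply, Ψ1_apply, hq]

lemma ptrace_eq (d : ℕ) (δ : ℝ) (M : Matrix (Fin d) (Fin d) ℂ) (i j : Fin d) :
    ptraceA ((M ⊗ₖ (1 : Matrix (Fin d) (Fin d) ℂ)) * proj (Ψ1 d δ)) i j =
      M j i * (cc d δ i : ℂ) * (cc d δ j : ℂ) := by
  unfold ptraceA
  simp_rw [entry_eq]
  simp

lemma trace_eq (d : ℕ) (δ : ℝ) (M : Matrix (Fin d) (Fin d) ℂ) :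
    ((M ⊗ₖ (1 : Matrix (Fin d) (Fin d) ℂ)) * proj (Ψ1 d δ)).trace =
      ∑ j, M j j * ((cc d δ j : ℂ))^2 := by
  rw [Matrix.trace]
  simp_rw [Matrix.diag]
  rw [Fintype.sum_prod_type]
  simp_rw [entry_eq]
  rw [Finset.sum_comm]
  apply Finset.sum_congr rfl
  intro j _
  rw [Finset.sum_ite_eq' Finset.univ j (fun a => M a j * (cc d δ j : ℂ) * (cc d δ j : ℂ))]
  simp [sq, mul_assoc]

lemma psd_diag_re_nonneg {n : Type*} [Fintype n] [DecidableEq n] {M : Matrix n n ℂ}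
    (hM : M.PosSemidef) (i : n) : 0 ≤ (M i i).re := by
  obtain ⟨B, rfl⟩ : ∃ B : Matrix n n ℂ, M = Bᴴ * B := by
    open scoped MatrixOrder Matrix.Norms.L2Operator in
    simpa [star_eq_conjTranspose] using CStarAlgebra.nonneg_iff_eq_star_mul_self.mp hM.nonneg
  rw [mul_apply, Complex.re_sum]
  apply Finset.sum_nonneg
  intro k _
  rw [conjTranspose_apply, mul_comm]
  simp only [RCLike.star_def, Complex.mul_conj]
  simp [Complex.normSq_nonneg]

lemma psd_entry_abs_le {n : Type*} [Fintype n] [DecidableEq n] {M : Matrix n n ℂ}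
    (hM : M.PosSemidef) (i j : n) :
    ‖M i j‖ ≤ Real.sqrt (M i i).re * Real.sqrt (M j j).re := by
  obtain ⟨B, rfl⟩ : ∃ B : Matrix n n ℂ, M = Bᴴ * B := by
    open scoped MatrixOrder Matrix.Norms.L2Operator in
    simpa [star_eq_conjTranspose] using CStarAlgebra.nonneg_iff_eq_star_mul_self.mp hM.nonneg
  have hdiag : ∀ k, ((Bᴴ * B) k k).re = ∑ l, ‖B l k‖ ^ 2 := by
    intro k
    rw [mul_apply, Complex.re_sum]
    apply Finset.sum_congr rfl
    intro l _
    rw [conjTranspose_apply, mul_comm]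
    simp only [RCLike.star_def, Complex.mul_conj]
    simp [Complex.sq_norm]
  calc ‖(Bᴴ * B) i j‖
      ≤ ∑ k, ‖B k i‖ * ‖B k j‖ := by
        rw [mul_apply]
        refine (norm_sum_le _ _).trans_eq ?_
        apply Finset.sum_congr rfl
        intro k _
        rw [conjTranspose_apply, norm_mul]
        simp
    _ ≤ Real.sqrt (∑ l, ‖B l i‖ ^ 2) * Real.sqrt (∑ l, ‖B l j‖ ^ 2) := by
        have := Real.sum_sqrt_mul_sqrt_le (f := fun k => ‖B k i‖ ^ 2)
          (g := fun k => ‖B k j‖ ^ 2) Finset.univ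
          (fun k => sq_nonneg _) (fun k => sq_nonneg _)
        simpa [Real.sqrt_sq, norm_nonneg] using this
    _ = Real.sqrt ((Bᴴ * B) i i).re * Real.sqrt ((Bᴴ * B) j j).re := by
        rw [hdiag i, hdiag j]

lemma limit_part (d : ℕ) :
    Filter.Tendsto
      (fun ε : ℝ => -(1 - (d - 1 : ℝ) * ε) * Real.log (1 - (d - 1 : ℝ) * ε) -
        (d - 1 : ℝ) * ε * Real.log ε)
      (nhdsWithin 0 (Set.Ioi 0)) (nhds 0) := by
  have h1 : Filter.Tendsto (fun ε : ℝ => -(1 - (d - 1 : ℝ) * ε) * Real.log (1 - (d - 1 : ℝ) * ε))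
      (nhds 0) (nhds 0) := by
    have hc : ContinuousAt (fun ε : ℝ => -(1 - (d - 1 : ℝ) * ε) * Real.log (1 - (d - 1 : ℝ) * ε))
        0 := by
      apply ContinuousAt.mul
      · fun_prop
      · exact (Real.continuousAt_log (by norm_num)).comp (by fun_prop)
    simpa using hc.tendsto
  have h2 : Filter.Tendsto (fun ε : ℝ => (d - 1 : ℝ) * ε * Real.log ε)
      (nhdsWithin 0 (Set.Ioi 0)) (nhds 0) := by
    have h := (tendsto_log_mul_rpow_nhdsGT_zero (r := 1) one_pos).const_mul ((d : ℝ) - 1)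
    rw [mul_zero] at h
    refine h.congr fun x => ?_
    rw [Real.rpow_one]; ring
  simpa using (h1.mono_left nhdsWithin_le_nhds).sub h2

/-- the entanglement entropy of ρ₁ = |Ψ₁⟩⟨Ψ₁| tends to 0 as δ → 0⁺,
while the maximal steered coherence of ρ₁ (in the eigenbasis of ρ_B, here the
standard basis) equals the maximal value d − 1 for every δ ∈ (0, 1/(d−1)). -/
theorem stmt16 (d : ℕ) (hd : 2 ≤ d) (δ : ℝ) (hδ0 : 0 < δ) (hδ1 : δ < 1 / (d - 1 : ℝ)) :
    Filter.Tendsto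
      (fun ε : ℝ => -(1 - (d - 1 : ℝ) * ε) * Real.log (1 - (d - 1 : ℝ) * ε) -
        (d - 1 : ℝ) * ε * Real.log ε)
      (nhdsWithin 0 (Set.Ioi 0)) (nhds 0) ∧
    IsGreatest {c | ∃ M : Matrix (Fin d) (Fin d) ℂ,
        M.PosSemidef ∧ ((1 : Matrix (Fin d) (Fin d) ℂ) - M).PosSemidef ∧
        0 < (((M ⊗ₖ (1 : Matrix (Fin d) (Fin d) ℂ)) * proj (Ψ1 d δ)).trace).re ∧
        c = (∑ i, ∑ j ∈ Finset.univ.filter (· ≠ i),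
            ‖ptraceA ((M ⊗ₖ 1) * proj (Ψ1 d δ)) i j‖) /
          (((M ⊗ₖ (1 : Matrix (Fin d) (Fin d) ℂ)) * proj (Ψ1 d δ)).trace).re}
      ((d : ℝ) - 1) := by
  haveI : NeZero d := ⟨by omega⟩
  have hd2 : (2:ℝ) ≤ (d:ℝ) := by exact_mod_cast hd
  have hdpos : (0:ℝ) < (d:ℝ) - 1 := by linarith
  have hδd : ((d:ℝ) - 1) * δ < 1 := by
    have := (lt_div_iff₀ hdpos).mp hδ1
    linarith
  have hc_pos : ∀ i : Fin d, 0 < cc d δ i := by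
    intro i
    unfold cc
    split_ifs
    · exact Real.sqrt_pos.mpr (by linarith)
    · exact Real.sqrt_pos.mpr hδ0
  refine ⟨limit_part d, ?_, ?_⟩
  · -- membership
    set S := ∑ i : Fin d, ((cc d δ i)⁻¹)^2 with hS
    have hSpos : 0 < S :=
      Finset.sum_pos (fun i _ => pow_pos (inv_pos.mpr (hc_pos i)) 2) Finset.univ_nonempty
    set t : ℝ := (Real.sqrt S)⁻¹ with ht
    have htpos : 0 < t := by positivity
    set u : Fin d → ℝ := fun i => t * (cc d δ i)⁻¹ with hu
    have hsum_u : ∑ i, (u i)^2 = 1 := by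
      have : ∑ i, (u i)^2 = t^2 * S := by
        rw [hS, Finset.mul_sum]
        exact Finset.sum_congr rfl fun i _ => by rw [hu]; ring
      rw [this, ht, inv_pow, Real.sq_sqrt hSpos.le, inv_mul_cancel₀ hSpos.ne']
    set v : Fin d → ℂ := fun i => (u i : ℂ) with hv
    set M := vecMulVec v (star v) with hM
    have hMapply : ∀ i j, M i j = (u i : ℂ) * (u j : ℂ) := by
      intro i j
      simp [hM, vecMulVec_apply, hv, Complex.conj_ofReal]
    set B : Matrix (Fin d) (Fin d) ℂ := fun i j => if i = 0 then v j else 0 with hB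
    have hMB : M = Bᴴ * B := by
      ext i j
      rw [mul_apply, Finset.sum_eq_single (0 : Fin d)]
      · rw [conjTranspose_apply]
        simp [hB, conjTranspose_apply, hMapply, hv, Complex.conj_ofReal]
      · intro k _ hk
        simp [hB, conjTranspose_apply, hk]
      · simp
    have hMpsd : M.PosSemidef := hMB ▸ Matrix.posSemidef_conjTranspose_mul_self B
    have hMM : M * M = M := by
      ext i j
      rw [mul_apply]
      simp_rw [hMapply]
      have : ∑ k, (u i : ℂ) * (u k : ℂ) * ((u k : ℂ) * (u j : ℂ))
          = (u i : ℂ) * (u j : ℂ) * ∑ k, ((u k : ℂ))^2 := by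
        rw [Finset.mul_sum]
        exact Finset.sum_congr rfl fun k _ => by ring
      rw [this]
      have h2 : ∑ k, ((u k : ℂ))^2 = 1 := by
        push_cast [← Complex.ofReal_pow]
        exact_mod_cast congrArg (Complex.ofReal) hsum_u
      rw [h2, mul_one]
    have h1M : ((1 : Matrix (Fin d) (Fin d) ℂ) - M).PosSemidef := by
      have hh : (1 : Matrix (Fin d) (Fin d) ℂ) - M
          = ((1 : Matrix (Fin d) (Fin d) ℂ) - M)ᴴ * ((1 : Matrix (Fin d) (Fin d) ℂ) - M) := by
        rw [conjTranspose_sub, conjTranspose_one, hMpsd.1]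
        simp [sub_mul, mul_sub, hMM]
      rw [hh]
      exact Matrix.posSemidef_conjTranspose_mul_self _
    have hucc : ∀ i, u i * cc d δ i = t := by
      intro i
      simp only [hu]
      rw [mul_assoc, inv_mul_cancel₀ (hc_pos i).ne', mul_one]
    have htr : (((M ⊗ₖ (1 : Matrix (Fin d) (Fin d) ℂ)) * proj (Ψ1 d δ)).trace).re
        = d * t^2 := by
      rw [trace_eq, Complex.re_sum]
      have : ∀ j : Fin d, (M j j * ((cc d δ j : ℂ))^2).re = t^2 := by
        intro j
        rw [hMapply]
        have : (u j : ℂ) * (u j : ℂ) * ((cc d δ j : ℂ))^2 = (((u j * cc d δ j)^2 : ℝ) : ℂ) := by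
          push_cast; ring
        rw [this, hucc, Complex.ofReal_re]
      rw [Finset.sum_congr rfl fun j _ => this j]
      simp [mul_comm]
    have hnum : (∑ i, ∑ j ∈ Finset.univ.filter (· ≠ i),
        ‖ptraceA ((M ⊗ₖ 1) * proj (Ψ1 d δ)) i j‖) = d * ((d:ℝ) - 1) * t^2 := by
      have habs : ∀ i j : Fin d,
          ‖ptraceA ((M ⊗ₖ 1) * proj (Ψ1 d δ)) i j‖ = (u j * cc d δ j) * (u i * cc d δ i) := by
        intro i j
        rw [ptrace_eq, hMapply]
        have : (u j : ℂ) * (u i : ℂ) * (cc d δ i : ℂ) * (cc d δ j : ℂ)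
            = (((u j * cc d δ j) * (u i * cc d δ i) : ℝ) : ℂ) := by push_cast; ring
        rw [this, Complex.norm_real, Real.norm_eq_abs, abs_of_nonneg]
        have h1 : 0 ≤ u j := le_of_eq_of_le (by ring) (mul_nonneg htpos.le (inv_pos.mpr (hc_pos j)).le)
        have h2 : 0 ≤ u i := le_of_eq_of_le (by ring) (mul_nonneg htpos.le (inv_pos.mpr (hc_pos i)).le)
        exact mul_nonneg (mul_nonneg h1 (hc_pos j).le) (mul_nonneg h2 (hc_pos i).le)
      have hterm : ∀ i j : Fin d,
          ‖ptraceA ((M ⊗ₖ 1) * proj (Ψ1 d δ)) i j‖ = t^2 := by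
        intro i j
        rw [habs, hucc, hucc, sq]
      simp_rw [hterm]
      rw [Finset.sum_congr rfl (fun i _ => Finset.sum_const _)]
      have hcard : ∀ i : Fin d, (Finset.univ.filter (· ≠ i)).card = d - 1 := by
        intro i
        rw [Finset.filter_ne', Finset.card_erase_of_mem (Finset.mem_univ i)]
        simp
      simp_rw [hcard]
      rw [Finset.sum_const]
      simp only [Finset.card_univ, Fintype.card_fin, nsmul_eq_mul, smul_eq_mul]
      have : ((d - 1 : ℕ) : ℝ) = (d:ℝ) - 1 := by
        have : (1:ℕ) ≤ d := by omega
        push_cast [this]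
        ring
      rw [this]
      ring
    refine ⟨M, hMpsd, h1M, ?_, ?_⟩
    · rw [htr]
      have hd0 : (0:ℝ) < (d:ℝ) := by linarith
      exact mul_pos hd0 (pow_pos htpos 2)
    · rw [hnum, htr]
      have hdd : (0:ℝ) < (d:ℝ) := by linarith
      field_simp
  · -- upper bound
    rintro x ⟨M, hM, h1M, htr, rfl⟩
    set a : Fin d → ℝ := fun i => Real.sqrt ((M i i).re) * cc d δ i with ha
    have ha0 : ∀ i, 0 ≤ a i := fun i =>
      mul_nonneg (Real.sqrt_nonneg _) (hc_pos i).le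
    have hden : (((M ⊗ₖ (1 : Matrix (Fin d) (Fin d) ℂ)) * proj (Ψ1 d δ)).trace).re
        = ∑ i, (a i)^2 := by
      rw [trace_eq, Complex.re_sum]
      apply Finset.sum_congr rfl
      intro i _
      have h1 : (M i i * ((cc d δ i : ℂ))^2).re = (M i i).re * (cc d δ i)^2 := by
        rw [mul_comm, ← Complex.ofReal_pow, Complex.re_ofReal_mul]
        ring
      rw [h1, ha, mul_pow, Real.sq_sqrt (psd_diag_re_nonneg hM i)]
    have hnum : (∑ i, ∑ j ∈ Finset.univ.filter (· ≠ i),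
          ‖ptraceA ((M ⊗ₖ 1) * proj (Ψ1 d δ)) i j‖)
        ≤ ∑ i, ∑ j ∈ Finset.univ.filter (· ≠ i), a i * a j := by
      apply Finset.sum_le_sum
      intro i _
      apply Finset.sum_le_sum
      intro j _
      rw [ptrace_eq]
      have h2 : ‖M j i * (cc d δ i : ℂ) * (cc d δ j : ℂ)‖
          = ‖M j i‖ * cc d δ i * cc d δ j := by
        rw [norm_mul, norm_mul, Complex.norm_real,
          Complex.norm_real, Real.norm_eq_abs, Real.norm_eq_abs, abs_of_pos (hc_pos i), abs_of_pos (hc_pos j)]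
      rw [h2, ha]
      have h3 := psd_entry_abs_le hM j i
      calc ‖M j i‖ * cc d δ i * cc d δ j
          ≤ (Real.sqrt (M j j).re * Real.sqrt (M i i).re) * cc d δ i * cc d δ j := by
            have := hc_pos i
            have := hc_pos j
            gcongr
        _ = Real.sqrt (M i i).re * cc d δ i * (Real.sqrt (M j j).re * cc d δ j) := by ring
    have hkey : ∑ i, ∑ j ∈ Finset.univ.filter (· ≠ i), a i * a j
        ≤ ((d:ℝ) - 1) * ∑ i, (a i)^2 := by
      have e1 : ∀ i : Fin d, ∑ j ∈ Finset.univ.filter (· ≠ i), a i * a j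
          = a i * (∑ j, a j) - (a i)^2 := by
        intro i
        rw [Finset.filter_ne', ← Finset.mul_sum,
          Finset.sum_erase_eq_sub (Finset.mem_univ i)]
        ring
      rw [Finset.sum_congr rfl fun i _ => e1 i, Finset.sum_sub_distrib, ← Finset.sum_mul]
      have e2 : (∑ i, a i) * (∑ j, a j) ≤ (d:ℝ) * ∑ i, (a i)^2 := by
        have := sq_sum_le_card_mul_sum_sq (s := (Finset.univ : Finset (Fin d))) (f := a)
        rw [← sq]
        simpa using this
      have hsum_sq_nonneg : (0:ℝ) ≤ ∑ i, (a i)^2 :=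
        Finset.sum_nonneg fun i _ => sq_nonneg _
      nlinarith [e2]
    rw [div_le_iff₀ htr, hden]
    calc (∑ i, ∑ j ∈ Finset.univ.filter (· ≠ i),
          ‖ptraceA ((M ⊗ₖ 1) * proj (Ψ1 d δ)) i j‖)
        ≤ ∑ i, ∑ j ∈ Finset.univ.filter (· ≠ i), a i * a j := hnum
      _ ≤ ((d:ℝ) - 1) * ∑ i, (a i)^2 := hkey
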